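/- Let E be a real normed vector space, p* ∈ E, C > 0, and let p : ℕ → E satisfy ‖p t − p*‖ ≤ C/t for every integer t ≥ 5. Let m : ℕ → E satisfy, for every integer t ≥ 5, m t = ((t−3)/(t+1)) • m(t−1) + (4/(t+1)) • p t, with arbitrary initial value m 4. Then there exists a constant K > 0 such that ‖m t − p*‖ ≤ K/t for every integer t ≥ 4; i.e., perturbation effects on the memory decay at rate O(1/t). -/

import Mathlib

/-- `O(1/t)` decay of perturbation effects: if the prediction perturbations
satisfy `‖p t − p*‖ ≤ C/t` for `t ≥ 5`, then the immediate memory unit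
satisfies `‖m t − p*‖ ≤ K/t` for all `t ≥ 4`, for some constant `K > 0`. -/
theorem memory_perturbation_O_inv_t
    {E : Type*} [NormedAddCommGroup E] [NormedSpace ℝ E]
    (pstar : E) (C : ℝ) (hC : 0 < C) (p m : ℕ → E)
    (hp : ∀ t : ℕ, 5 ≤ t → ‖p t - pstar‖ ≤ C / (t : ℝ))
    (hm : ∀ t : ℕ, 5 ≤ t →
      m t = (((t : ℝ) - 3) / ((t : ℝ) + 1)) • m (t - 1)
        + ((4 : ℝ) / ((t : ℝ) + 1)) • p t) :
    ∃ K : ℝ, 0 < K ∧ ∀ t : ℕ, 4 ≤ t → ‖m t - pstar‖ ≤ K / (t : ℝ) := by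
  set K : ℝ := max (4*C) (4*‖m 4 - pstar‖ + 1) with hKdef
  have hK4C : 4*C ≤ K := le_max_left _ _
  have hKm : 4*‖m 4 - pstar‖ + 1 ≤ K := le_max_right _ _
  have hKpos : 0 < K :=
    lt_of_lt_of_le (by positivity) hKm
  refine ⟨K, hKpos, ?_⟩
  intro t ht
  induction t, ht using Nat.le_induction with
  | base =>
      have h4 : ((4:ℕ):ℝ) = 4 := by norm_num
      rw [h4, le_div_iff₀ (by norm_num : (0:ℝ) < 4)]
      nlinarith [norm_nonneg (m 4 - pstar)]
  | succ n hn ih =>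
      have hn5 : 5 ≤ n + 1 := by omega
      have heq := hm (n+1) hn5
      have hpn := hp (n+1) hn5
      have hsub : n + 1 - 1 = n := rfl
      rw [hsub] at heq
      push_cast at heq hpn ⊢
      set N : ℝ := (n : ℝ) with hNdef
      have hN4 : (4:ℝ) ≤ N := by rw [hNdef]; exact_mod_cast hn
      have h0 : (0:ℝ) < N := by linarith
      have h1 : (0:ℝ) < N + 1 := by linarith
      have h2 : (0:ℝ) < N + 1 + 1 := by linarith
      set a : ℝ := (N + 1 - 3) / (N + 1 + 1) with hadef
      set b : ℝ := 4 / (N + 1 + 1) with hbdef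
      have hsum : a + b = 1 := by
        rw [hadef, hbdef, ← add_div, div_eq_one_iff_eq h2.ne']
        ring
      have ha0 : 0 ≤ a := by
        apply div_nonneg <;> linarith
      have hb0 : 0 ≤ b := by
        apply div_nonneg <;> linarith
      have hdecomp : m (n+1) - pstar = a • (m n - pstar) + b • (p (n+1) - pstar) := by
        have h3 : a • pstar + b • pstar = pstar := by
          rw [← add_smul, hsum, one_smul]
        calc m (n+1) - pstar
            = a • m n + b • p (n+1) - (a • pstar + b • pstar) := by rw [heq, h3]
          _ = a • (m n - pstar) + b • (p (n+1) - pstar) := by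
              rw [smul_sub, smul_sub]; abel
      have hnorm : ‖m (n+1) - pstar‖ ≤ a * ‖m n - pstar‖ + b * ‖p (n+1) - pstar‖ := by
        rw [hdecomp]
        calc ‖a • (m n - pstar) + b • (p (n+1) - pstar)‖
            ≤ ‖a • (m n - pstar)‖ + ‖b • (p (n+1) - pstar)‖ := norm_add_le _ _
          _ = a * ‖m n - pstar‖ + b * ‖p (n+1) - pstar‖ := by
              rw [norm_smul, norm_smul, Real.norm_of_nonneg ha0, Real.norm_of_nonneg hb0]
      have hchain : a * ‖m n - pstar‖ + b * ‖p (n+1) - pstar‖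
          ≤ a * (K / N) + b * (C / (N + 1)) := by
        have := mul_le_mul_of_nonneg_left ih ha0
        have := mul_le_mul_of_nonneg_left hpn hb0
        linarith
      have hfinal : a * (K / N) + b * (C / (N + 1)) ≤ K / (N + 1) := by
        have hkey : 0 ≤ K * (3*N + 2) - 4*C*N := by nlinarith
        rw [hadef, hbdef, div_mul_div_comm, div_mul_div_comm,
          div_add_div _ _ (by positivity) (by positivity),
          div_le_div_iff₀ (by positivity) (by positivity)]
        nlinarith [mul_nonneg (mul_nonneg h1.le h2.le) hkey]
      linarith
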